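/- Let f : ℝ → ℝ be given by f(x) = √(1 + cosh⁴(x)) and let u(x) = tanh(x). Then for every x ∈ ℝ one has f(x)·u'(x)/√(1 + u'(x)²) = 1; moreover |u(x)| < 1 and 0 < u'(x) ≤ 1 for all x ∈ ℝ, so u is a bounded non-constant solution with bounded derivative. -/

import Mathlib

open Real

noncomputable section

lemma tanh_hasDerivAt (x : ℝ) : HasDerivAt Real.tanh (1 / Real.cosh x ^ 2) x := by
  have h := ((Real.hasDerivAt_sinh x).div (Real.hasDerivAt_cosh x) (Real.cosh_pos x).ne')
  have heq : (Real.cosh x * Real.cosh x - Real.sinh x * Real.sinh x) / Real.cosh x ^ 2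
      = 1 / Real.cosh x ^ 2 := by
    rw [show Real.cosh x * Real.cosh x - Real.sinh x * Real.sinh x
        = Real.cosh x ^ 2 - Real.sinh x ^ 2 by ring, Real.cosh_sq_sub_sinh_sq]
  have : (Real.sinh / Real.cosh) = Real.tanh := by
    funext y; rw [Pi.div_apply, Real.tanh_eq_sinh_div_cosh]
  rwa [this, heq] at h

lemma deriv_tanh' (x : ℝ) : deriv Real.tanh x = 1 / Real.cosh x ^ 2 :=
  (tanh_hasDerivAt x).deriv

theorem stmt12 (f u : ℝ → ℝ)
    (hf : ∀ x, f x = Real.sqrt (1 + Real.cosh x ^ 4))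
    (hu : ∀ x, u x = Real.tanh x) :
    (∀ x : ℝ, f x * deriv u x / Real.sqrt (1 + deriv u x ^ 2) = 1) ∧
    (∀ x : ℝ, |u x| < 1) ∧
    (∀ x : ℝ, 0 < deriv u x ∧ deriv u x ≤ 1) := by
  have hueq : u = Real.tanh := funext hu
  have hd : ∀ x, deriv u x = 1 / Real.cosh x ^ 2 := by
    intro x; rw [hueq, deriv_tanh']
  have hc1 : ∀ x : ℝ, (1:ℝ) ≤ Real.cosh x := Real.one_le_cosh
  have hcpos : ∀ x : ℝ, (0:ℝ) < Real.cosh x := Real.cosh_pos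
  refine ⟨?_, ?_, ?_⟩
  · intro x
    have hc := hcpos x
    have hc2 : (0:ℝ) < Real.cosh x ^ 2 := by positivity
    rw [hf, hd]
    have hsq : 1 + (1 / Real.cosh x ^ 2) ^ 2
        = (1 + Real.cosh x ^ 4) / (Real.cosh x ^ 2) ^ 2 := by
      field_simp; ring
    rw [hsq, Real.sqrt_div (by positivity : (0:ℝ) ≤ 1 + Real.cosh x ^ 4),
      Real.sqrt_sq hc2.le]
    have hpos : (0:ℝ) < Real.sqrt (1 + Real.cosh x ^ 4) := by
      apply Real.sqrt_pos.2; positivity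
    field_simp
  · intro x
    rw [hueq]
    have := Real.cosh_pos x
    rw [Real.tanh_eq_sinh_div_cosh, abs_div, abs_of_pos this, div_lt_one this]
    rw [abs_lt]
    constructor
    · nlinarith [Real.cosh_sq_sub_sinh_sq x, Real.cosh_pos x,
        sq_nonneg (Real.cosh x + Real.sinh x), sq_nonneg (Real.cosh x - Real.sinh x)]
    · nlinarith [Real.cosh_sq_sub_sinh_sq x, sq_nonneg (Real.cosh x + Real.sinh x),
        sq_nonneg (Real.cosh x - Real.sinh x), Real.cosh_pos x]
  · intro x
    rw [hd]
    have hc := hcpos x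
    have := hc1 x
    constructor
    · positivity
    · rw [div_le_one (by positivity)]; nlinarith
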